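/- Let S = {x ∈ ℝⁿ : ‖x‖₀ ≤ s} with s < n, and let x* ∈ S with support supp(x*) = {i : xᵢ* ≠ 0}. If |supp(x*)| = s, then the Bouligand tangent cone to S at x* equals the coordinate subspace ℝ_{supp(x*)} = {d ∈ ℝⁿ : dᵢ = 0 for all i ∉ supp(x*)}. -/

import Mathlib

open Filter Topology Metric Set
open scoped Classical

noncomputable section

abbrev E (n : ℕ) := EuclideanSpace ℝ (Fin n)

/-- Bouligand tangent cone. -/
def bouligand {n : ℕ} (S : Set (E n)) (x : E n) : Set (E n) :=
  {d | ∃ t : ℕ → ℝ, ∃ dk : ℕ → E n,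
    (∀ k, 0 < t k) ∧ Tendsto t atTop (𝓝 0) ∧ Tendsto dk atTop (𝓝 d) ∧
    ∀ k, x + t k • dk k ∈ S}

/-- Fréchet (regular) normal cone. -/
def frechetNormal {n : ℕ} (S : Set (E n)) (x : E n) : Set (E n) :=
  {v | ∀ ε > (0 : ℝ), ∃ δ > (0 : ℝ), ∀ y ∈ S, ‖y - x‖ < δ →
    (inner ℝ v (y - x) : ℝ) ≤ ε * ‖y - x‖}

/-- Mordukhovich (limiting) normal cone. -/
def limitingNormal {n : ℕ} (S : Set (E n)) (x : E n) : Set (E n) :=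
  {v | ∃ xk : ℕ → E n, ∃ vk : ℕ → E n,
    (∀ k, xk k ∈ S) ∧ Tendsto xk atTop (𝓝 x) ∧
    (∀ k, vk k ∈ frechetNormal S (xk k)) ∧ Tendsto vk atTop (𝓝 v)}

/-- Directional limiting normal cone. -/
def dirLimitingNormal {n : ℕ} (S : Set (E n)) (x d : E n) : Set (E n) :=
  {v | ∃ t : ℕ → ℝ, ∃ dk : ℕ → E n, ∃ vk : ℕ → E n,
    (∀ k, 0 < t k) ∧ Tendsto t atTop (𝓝 0) ∧ Tendsto dk atTop (𝓝 d) ∧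
    Tendsto vk atTop (𝓝 v) ∧ ∀ k, vk k ∈ frechetNormal S (x + t k • dk k)}

/-- Support of a vector. -/
def supp {n : ℕ} (x : E n) : Finset (Fin n) := Finset.univ.filter (fun i => x i ≠ 0)

/-- The ℓ₀ "norm": number of nonzero components. -/
def l0 {n : ℕ} (x : E n) : ℕ := (supp x).card

/-- The sparsity set {x : ‖x‖₀ ≤ s}. -/
def sparseSet (n s : ℕ) : Set (E n) := {x | l0 x ≤ s}

/-- Coordinate subspace ℝ_I of vectors supported on I. -/
def coordSub {n : ℕ} (I : Finset (Fin n)) : Set (E n) := {x | ∀ i ∉ I, x i = 0}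

theorem stmt10 {n s : ℕ} (hs : s < n) (x : E n) (hx : x ∈ sparseSet n s)
    (hcard : (supp x).card = s) :
    bouligand (sparseSet n s) x = {d : E n | ∀ i ∉ supp x, d i = 0} := by

  ext d
  constructor
  · rintro ⟨t, dk, hpos, ht, hdk, hmem⟩
    intro i hi
    by_contra hdi
    -- coordinate convergence
    have hcoord : ∀ j : Fin n, Tendsto (fun k => dk k j) atTop (𝓝 (d j)) := by
      intro j
      exact ((EuclideanSpace.proj j).continuous.tendsto d).comp hdk
    -- eventually dk k i ≠ 0
    have h1 : ∀ᶠ k in atTop, dk k i ≠ 0 := by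
      have := (hcoord i).eventually_ne hdi
      simpa using this
    -- eventually all coords of supp x nonzero in x + t k • dk k
    have h2 : ∀ j ∈ supp x, ∀ᶠ k in atTop, (x + t k • dk k) j ≠ 0 := by
      intro j hj
      have hxj : x j ≠ 0 := by
        simpa [supp] using hj
      have hlim : Tendsto (fun k => (x + t k • dk k) j) atTop (𝓝 (x j)) := by
        have : Tendsto (fun k => x j + t k * dk k j) atTop (𝓝 (x j + 0 * d j)) :=
          tendsto_const_nhds.add (ht.mul (hcoord j))
        simpa using this
      exact hlim.eventually_ne hxj
    have h2' : ∀ᶠ k in atTop, ∀ j ∈ supp x, (x + t k • dk k) j ≠ 0 :=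
      (Filter.eventually_all_finset (supp x)).2 h2
    obtain ⟨k, hk1, hk2⟩ := (h1.and h2').exists
    -- supp x ∪ {i} ⊆ supp (x + t k • dk k)
    have hsub : insert i (supp x) ⊆ supp (x + t k • dk k) := by
      intro j hj
      rcases Finset.mem_insert.1 hj with rfl | hj
      · have hxi : x j = 0 := by
          by_contra h
          exact hi (by simp [supp, h])
        simp only [supp, Finset.mem_filter, Finset.mem_univ, true_and]
        show (x + t k • dk k) j ≠ 0
        have : (x + t k • dk k) j = x j + t k * dk k j := rfl
        rw [this, hxi, zero_add]
        exact mul_ne_zero (ne_of_gt (hpos k)) hk1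
      · simp only [supp, Finset.mem_filter, Finset.mem_univ, true_and]
        exact hk2 j hj
    have hcard2 : s + 1 ≤ (supp (x + t k • dk k)).card := by
      have : (insert i (supp x)).card = s + 1 := by
        rw [Finset.card_insert_of_notMem hi, hcard]
      calc s + 1 = (insert i (supp x)).card := this.symm
        _ ≤ (supp (x + t k • dk k)).card := Finset.card_le_card hsub
    have := hmem k
    simp only [sparseSet, l0, Set.mem_setOf_eq] at this
    omega
  · intro hd
    refine ⟨fun k => 1 / (k + 1), fun _ => d, fun k => by positivity,
      tendsto_one_div_add_atTop_nhds_zero_nat, tendsto_const_nhds, fun k => ?_⟩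
    have hsub : supp (x + (1 / ((k : ℝ) + 1)) • d) ⊆ supp x := by
      intro j hj
      simp only [supp, Finset.mem_filter, Finset.mem_univ, true_and] at hj ⊢
      by_contra hxj
      apply hj
      have hdj : d j = 0 := hd j (by simp [supp, hxj])
      show x j + (1 / ((k : ℝ) + 1)) * d j = 0
      rw [hxj, hdj]; ring
    simp only [sparseSet, l0, Set.mem_setOf_eq]
    calc (supp (x + (1 / ((k : ℝ) + 1)) • d)).card ≤ (supp x).card := Finset.card_le_card hsub
      _ = s := hcard
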